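/- Every finite group of square-free order can be generated by two elements. -/

import Mathlib

/-- A finite commutative group of squarefree order is cyclic. -/
lemma aux_isCyclic_of_squarefree_comm {A : Type*} [CommGroup A] [Finite A]
    (h : Squarefree (Nat.card A)) : IsCyclic A := by
  refine IsCyclic.of_exponent_eq_card ?_
  refine Nat.dvd_antisymm Group.exponent_dvd_nat_card ?_
  have hA : Nat.card A ≠ 0 := h.ne_zero
  have hexp : Monoid.exponent A ≠ 0 := Monoid.exponent_ne_zero_of_finite
  rw [← Nat.factorization_le_iff_dvd hA hexp, Finsupp.le_def]
  intro p
  by_cases hp : p.Prime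
  · by_cases hdvd : p ∣ Nat.card A
    · haveI : Fact p.Prime := ⟨hp⟩
      obtain ⟨g, hg⟩ := exists_prime_orderOf_dvd_card' (G := A) p hdvd
      have h1 : p ∣ Monoid.exponent A := hg ▸ Monoid.order_dvd_exponent g
      calc (Nat.card A).factorization p ≤ 1 := h.natFactorization_le_one p
        _ ≤ (Monoid.exponent A).factorization p := hp.factorization_pos_of_dvd hexp h1
    · simp [Nat.factorization_eq_zero_of_not_dvd hdvd]
  · simp [Nat.factorization_eq_zero_of_not_prime _ hp]

/-- Automorphisms of a cyclic group commute. -/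
lemma aux_mulAut_comm {D : Type*} [Group D] [IsCyclic D] (σ τ : MulAut D) :
    σ * τ = τ * σ := by
  obtain ⟨g, hg⟩ := IsCyclic.exists_generator (α := D)
  have key : ∀ σ : MulAut D, ∃ a : ℤ, ∀ x : D, σ x = x ^ a := by
    intro σ
    obtain ⟨a, ha⟩ := hg (σ g)
    have ha' : g ^ a = σ g := ha
    refine ⟨a, fun x => ?_⟩
    obtain ⟨t, ht⟩ := hg x
    have ht' : g ^ t = x := ht
    rw [← ht', map_zpow, ← ha', ← zpow_mul, ← zpow_mul, mul_comm]
  obtain ⟨a, ha⟩ := key σ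
  obtain ⟨b, hb⟩ := key τ
  ext x
  show σ (τ x) = τ (σ x)
  rw [ha, hb, ha, hb, ← zpow_mul, ← zpow_mul, mul_comm]

/-- A group of squarefree order has cyclic commutator subgroup. -/
lemma aux_isCyclic_commutator (n : ℕ) :
    ∀ (G : Type) (_ : Group G), Squarefree n → Nat.card G = n →
      IsCyclic ↥(commutator G) := by
  induction n using Nat.strong_induction_on with
  | _ n ih =>
    intro G _ hsq hcard
    have hn0 : n ≠ 0 := hsq.ne_zero
    have hfin : Finite G := Nat.finite_of_card_ne_zero (hcard ▸ hn0)
    rcases eq_or_ne n 1 with rfl | hn1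
    · haveI : Subsingleton G := (Nat.card_eq_one_iff_unique.mp hcard).1
      infer_instance
    -- Setup: smallest prime p, Sylow p-subgroup P of order p
    set p := n.minFac with hp_def
    have hp : p.Prime := Nat.minFac_prime hn1
    haveI : Fact p.Prime := ⟨hp⟩
    obtain ⟨P⟩ : Nonempty (Sylow p G) := inferInstance
    have hPcard : Nat.card ↥(P : Subgroup G) = p := by
      rw [P.card_eq_multiplicity, hcard]
      have h1 : n.factorization p = 1 :=
        le_antisymm (hsq.natFactorization_le_one p)
          (hp.factorization_pos_of_dvd hn0 (Nat.minFac_dvd n))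
      rw [h1, pow_one]
    haveI hPcyc : IsCyclic ↥(P : Subgroup G) := isCyclic_of_prime_card hPcard
    -- Burnside: normalizer of P is contained in centralizer of P
    have hP : Subgroup.normalizer ((P : Subgroup G) : Set G) ≤ Subgroup.centralizer (P : Set G) := by
      set f := (P : Subgroup G).normalizerMonoidHom with hf_def
      haveI : Finite (MulAut ↥(P : Subgroup G)) :=
        Finite.of_injective (fun σ => ⇑σ) DFunLike.coe_injective
      have h1 : Nat.card f.range ∣ p - 1 := by
        have h2 := Subgroup.card_subgroup_dvd_card f.range
        rwa [IsCyclic.card_mulAut, hPcard, Nat.totient_prime hp] at h2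
      have h2 : Nat.card f.range ∣ n := by
        calc Nat.card f.range ∣ Nat.card ↥(Subgroup.normalizer ((P : Subgroup G) : Set G)) :=
              Subgroup.card_dvd_of_surjective f.rangeRestrict f.rangeRestrict_surjective
          _ ∣ Nat.card G := Subgroup.card_subgroup_dvd_card _
          _ = n := hcard
      have h3 : f.range = ⊥ := by
        rw [← Subgroup.card_eq_one]
        by_contra hne
        have hq : (Nat.card f.range).minFac.Prime := Nat.minFac_prime hne
        have hq1 : (Nat.card f.range).minFac ∣ p - 1 :=
          dvd_trans (Nat.minFac_dvd _) h1
        have hq2 : (Nat.card f.range).minFac ∣ n :=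
          dvd_trans (Nat.minFac_dvd _) h2
        have h4 : p ≤ (Nat.card f.range).minFac := Nat.minFac_le_of_dvd hq.two_le hq2
        have h5 : (Nat.card f.range).minFac ≤ p - 1 :=
          Nat.le_of_dvd (by have := hp.two_le; omega) hq1
        have := hp.two_le
        omega
      intro g hg
      have hker : (⟨g, hg⟩ : ↥(Subgroup.normalizer ((P : Subgroup G) : Set G))) ∈ f.ker := by
        rw [MonoidHom.mem_ker]
        have : f ⟨g, hg⟩ ∈ f.range := ⟨_, rfl⟩
        rwa [h3, Subgroup.mem_bot] at this
      rw [hf_def, Subgroup.normalizerMonoidHom_ker, Subgroup.mem_subgroupOf] at hker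
      exact hker
    haveI : (P : Subgroup G).FiniteIndex := Subgroup.finiteIndex_of_finite
    -- K: the normal p-complement
    set K := (MonoidHom.transferSylow P hP).ker with hK_def
    have hcommK : commutator G ≤ K := by
      rw [commutator, Subgroup.commutator_le]
      intro g _ h _
      rw [MonoidHom.mem_ker, map_commutatorElement, commutatorElement_eq_one_iff_commute]
      exact Subtype.ext
        (hP (Subgroup.le_normalizer (MonoidHom.transferSylow P hP h).2)
          _ (MonoidHom.transferSylow P hP g).2)
    have hKcard : Nat.card K < n := by
      have hcm := (MonoidHom.ker_transferSylow_isComplement' P hP).card_mul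
      rw [hPcard, hcard] at hcm
      have hK0 : Nat.card K ≠ 0 := by
        intro h0
        rw [h0, zero_mul] at hcm
        exact hn0 hcm.symm
      calc Nat.card K < Nat.card K * p := by
            have := hp.two_le
            have := Nat.pos_of_ne_zero hK0
            nlinarith
        _ = n := hcm
    -- Apply induction hypothesis to H := commutator G
    set H := commutator G with hH_def
    have hHdvd : Nat.card ↥H ∣ n := hcard ▸ Subgroup.card_subgroup_dvd_card H
    have hHlt : Nat.card ↥H < n :=
      lt_of_le_of_lt
        (Nat.le_of_dvd (Nat.pos_of_ne_zero fun h0 => by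
          have := (MonoidHom.ker_transferSylow_isComplement' P hP).card_mul
          rw [hPcard, hcard, ← hK_def, h0] at this
          omega) (Subgroup.card_dvd_of_le hcommK)) hKcard
    haveI ihH : IsCyclic ↥(commutator ↥H) :=
      ih _ hHlt ↥H _ (hsq.squarefree_of_dvd hHdvd) rfl
    -- D := the second commutator as a subgroup of G
    set D : Subgroup G := ⁅H, H⁆ with hD_def
    have hDmap : Subgroup.map H.subtype (commutator ↥H) = D := by
      rw [commutator, Subgroup.map_commutator]
      congr 1 <;>
        rw [← MonoidHom.range_eq_map, Subgroup.range_subtype]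
    haveI hDcyc : IsCyclic ↥D := by
      rw [← hDmap]
      exact isCyclic_of_surjective _
        (Subgroup.equivMapOfInjective (commutator ↥H) H.subtype
          H.subtype_injective).surjective
    haveI hDnormal : D.Normal := Subgroup.commutator_normal H H
    -- the conjugation action of G on D kills the commutator subgroup
    letI : CommGroup (MulAut ↥D) :=
      { (inferInstance : Group (MulAut ↥D)) with mul_comm := aux_mulAut_comm }
    have hker : H ≤ (MulAut.conjNormal (G := G) (H := D)).ker :=
      Abelianization.commutator_subset_ker _
    have hcent : ∀ h ∈ H, ∀ d ∈ D, h * d = d * h := by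
      intro h hh d hd
      have h1 : MulAut.conjNormal (G := G) h = 1 := hker hh
      have h2 : (MulAut.conjNormal (G := G) h ⟨d, hd⟩ : G) = h * d * h⁻¹ :=
        MulAut.conjNormal_apply h ⟨d, hd⟩
      rw [h1] at h2
      simp only [MulAut.one_apply] at h2
      have h3 : h * d * h⁻¹ = d := h2.symm
      calc h * d = h * d * h⁻¹ * h := by group
        _ = d * h := by rw [h3]
    -- hence the commutator of H is central in H
    have hcenter : commutator ↥H ≤ Subgroup.center ↥H := by
      intro x hx
      rw [Subgroup.mem_center_iff]
      intro y
      have hxD : (x : G) ∈ D := hDmap ▸ Subgroup.mem_map_of_mem H.subtype hx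
      exact Subtype.ext (hcent (y : G) y.2 (x : G) hxD)
    -- the abelianization of H is cyclic
    haveI : IsCyclic (Abelianization ↥H) := by
      refine aux_isCyclic_of_squarefree_comm (hsq.squarefree_of_dvd ?_)
      calc Nat.card (Abelianization ↥H) ∣ Nat.card ↥H :=
            Subgroup.card_dvd_of_surjective Abelianization.of
              (fun x => Quot.inductionOn x fun g => ⟨g, rfl⟩)
        _ ∣ n := hHdvd
    -- hence H is commutative
    have hofker : (Abelianization.of : ↥H →* Abelianization ↥H).ker ≤ Subgroup.center ↥H := by
      intro x hx
      refine hcenter ?_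
      rw [MonoidHom.mem_ker] at hx
      exact (QuotientGroup.eq_one_iff x).mp hx
    letI : CommGroup ↥H := commGroupOfCyclicCenterQuotient Abelianization.of hofker
    exact aux_isCyclic_of_squarefree_comm (hsq.squarefree_of_dvd hHdvd)

/-- Every finite group of square-free order can be generated by two elements. -/
theorem stmt_3 (G : Type) [Group G] [Finite G] (h : Squarefree (Nat.card G)) :
    ∃ a b : G, Subgroup.closure {a, b} = ⊤ := by
  haveI hc : IsCyclic ↥(commutator G) :=
    aux_isCyclic_commutator (Nat.card G) G _ h rfl
  haveI : IsCyclic (Abelianization G) := by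
    refine aux_isCyclic_of_squarefree_comm (h.squarefree_of_dvd ?_)
    exact Subgroup.card_dvd_of_surjective Abelianization.of
      (fun x => Quot.inductionOn x fun g => ⟨g, rfl⟩)
  obtain ⟨a₀, ha⟩ := hc.exists_generator
  obtain ⟨q, hq⟩ := IsCyclic.exists_generator (α := Abelianization G)
  obtain ⟨b, rfl⟩ : ∃ b : G, Abelianization.of b = q :=
    Quot.inductionOn q fun g => ⟨g, rfl⟩
  refine ⟨(a₀ : G), b, ?_⟩
  set S := Subgroup.closure {(a₀ : G), b} with hS_def
  have hbS : b ∈ S := Subgroup.subset_closure (by simp)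
  have h1 : commutator G ≤ S := by
    intro x hx
    obtain ⟨k, hk⟩ := ha ⟨x, hx⟩
    have hk' : a₀ ^ k = (⟨x, hx⟩ : ↥(commutator G)) := hk
    have hxk : (a₀ : G) ^ k = x := by
      have := congrArg (fun y : ↥(commutator G) => (y : G)) hk'
      simpa using this
    exact hxk ▸ Subgroup.zpow_mem S (Subgroup.subset_closure (by simp)) k
  rw [eq_top_iff]
  intro x _
  obtain ⟨k, hk⟩ := hq (Abelianization.of x)
  have hk' : Abelianization.of b ^ k = Abelianization.of x := hk
  have hmem : Abelianization.of ((b ^ k)⁻¹ * x) = 1 := by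
    rw [map_mul, map_inv, map_zpow, hk', inv_mul_cancel]
  have h2 : (b ^ k)⁻¹ * x ∈ commutator G :=
    (QuotientGroup.eq_one_iff _).mp hmem
  have h3 : (b ^ k)⁻¹ * x ∈ S := h1 h2
  have h4 : b ^ k ∈ S := Subgroup.zpow_mem S hbS k
  have := S.mul_mem h4 h3
  rwa [mul_inv_cancel_left] at this
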